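/- Let z ∈ ℂ and let u be a solution of the interface equation −u'' = z u for μ on an interval [s, t] with s, t ∉ {t_n : n}. Then W(u, ū)(t) − W(u, ū)(s) = (conj(z) − z) · ∫_s^t |u(r)|² dr, where ū is the pointwise complex conjugate of u. In particular, if Im z > 0, t > s, and u(s) = 0 with u not identically zero, then W(u, ū)(t) = −2i · (Im z) · ∫_s^t |u(r)|² dr ≠ 0. -/

import Mathlib

open Set Filter Topology MeasureTheory

/-- The part of the interval `J` off the atoms `{tₙ}`. -/
def offAtoms (ts : ℕ → ℝ) (J : Set ℝ) : Set ℝ := J \ Set.range ts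

/-- One-sided limits of `u` and its derivative exist at the atom `ts n`, and the
interface conditions `u(tₙ+) = √bₙ · u(tₙ-)`, `u'(tₙ+) = u'(tₙ-)/√bₙ` hold. -/
def InterfaceAt (ts bs : ℕ → ℝ) (S : Set ℝ) (u : ℝ → ℂ) (n : ℕ) : Prop :=
  ∃ uL uR duL duR : ℂ,
    Tendsto u (nhdsWithin (ts n) (S ∩ Iio (ts n))) (nhds uL) ∧
    Tendsto u (nhdsWithin (ts n) (S ∩ Ioi (ts n))) (nhds uR) ∧
    Tendsto (derivWithin u S) (nhdsWithin (ts n) (S ∩ Iio (ts n))) (nhds duL) ∧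
    Tendsto (derivWithin u S) (nhdsWithin (ts n) (S ∩ Ioi (ts n))) (nhds duR) ∧
    uR = (Real.sqrt (bs n) : ℂ) * uL ∧
    duR = duL / (Real.sqrt (bs n) : ℂ)

/-- `u` is a solution of the interface equation `-u'' = z·u` for the atomic measure
with atoms `ts n` and branching numbers `bs n`, on the interval `J`:
`u` is twice continuously differentiable on `J` off the atoms with `-u'' = z·u` there,
and at every atom in the interior of `J` it has one-sided limits satisfying
the interface conditions. -/
def IsInterfaceSolution (ts bs : ℕ → ℝ) (z : ℂ) (J : Set ℝ) (u : ℝ → ℂ) : Prop :=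
  ContDiffOn ℝ 2 u (offAtoms ts J) ∧
  (∀ x ∈ offAtoms ts J,
      -(derivWithin (derivWithin u (offAtoms ts J)) (offAtoms ts J) x) = z * u x) ∧
  (∀ n, ts n ∈ interior J → InterfaceAt ts bs (offAtoms ts J) u n)

/-- The Wronskian `W(f, g)(r) = f'(r)·g(r) - f(r)·g'(r)`, with derivatives taken
within the set `S`. -/
noncomputable def wron (S : Set ℝ) (f g : ℝ → ℂ) (r : ℝ) : ℂ :=
  derivWithin f S r * g r - f r * derivWithin g S r

/-- The Wronskian `W(f, ḡ)(r)` of `f` and the pointwise complex conjugate of `g`. -/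
noncomputable def wronConj (S : Set ℝ) (f g : ℝ → ℂ) (r : ℝ) : ℂ :=
  derivWithin f S r * (starRingEnd ℂ) (g r)
    - f r * (starRingEnd ℂ) (derivWithin g S r)

lemma aux_sep {ts : ℕ → ℝ} {γ : ℝ}
    (ht_mono : StrictMono ts) (hgap : ∀ n, γ ≤ ts (n + 1) - ts n) :
    ∀ m n : ℕ, m ≠ n → γ ≤ |ts m - ts n| := by
  have key : ∀ m n : ℕ, m < n → γ ≤ ts n - ts m := by
    intro m n h
    have h1 : ts m + γ ≤ ts (m + 1) := by linarith [hgap m]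
    have h2 : ts (m + 1) ≤ ts n := ht_mono.monotone h
    linarith
  intro m n h
  rcases lt_or_gt_of_ne h with h' | h'
  · have := key m n h'
    have h0 := ht_mono h'
    rw [abs_sub_comm, abs_of_nonneg (by linarith)]; linarith
  · have := key n m h'
    have h0 := ht_mono h'
    rw [abs_of_nonneg (by linarith)]; linarith

lemma aux_punct {ts : ℕ → ℝ} {γ : ℝ}
    (ht_mono : StrictMono ts) (hgap : ∀ n, γ ≤ ts (n + 1) - ts n) (n : ℕ) :
    ∀ y, |y - ts n| < γ → y ≠ ts n → y ∉ Set.range ts := by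
  rintro y hy hne ⟨k, rfl⟩
  rcases eq_or_ne k n with rfl | hk
  · exact hne rfl
  · exact absurd hy (not_lt.2 (aux_sep ht_mono hgap k n hk))

lemma aux_ball {ts : ℕ → ℝ} {γ : ℝ} (hγ : 0 < γ)
    (ht_mono : StrictMono ts) (hgap : ∀ n, γ ≤ ts (n + 1) - ts n)
    {x : ℝ} (hx : x ∉ Set.range ts) :
    ∃ ε > 0, ∀ y, |y - x| < ε → y ∉ Set.range ts := by
  by_cases h : ∃ m, |ts m - x| < γ / 2
  · obtain ⟨m, hm⟩ := h
    have hd : 0 < |ts m - x| := by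
      rw [abs_pos, sub_ne_zero]
      rintro rfl; exact hx ⟨m, rfl⟩
    refine ⟨|ts m - x|, hd, ?_⟩
    rintro y hy ⟨k, rfl⟩
    rcases eq_or_ne k m with rfl | hk
    · rw [abs_sub_comm] at hy; exact absurd hy (lt_irrefl _)
    · have h1 := aux_sep ht_mono hgap k m hk
      have h2 : |ts k - ts m| ≤ |ts k - x| + |x - ts m| := abs_sub_le _ _ _
      rw [abs_sub_comm x (ts m)] at h2
      linarith
  · push_neg at h
    refine ⟨γ / 2, by linarith, ?_⟩
    rintro y hy ⟨k, rfl⟩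
    exact absurd hy (not_lt.2 (h k))

/-- for a solution `u` of the interface equation `-u'' = z u` on `[s, τ]`,
`W(u, ū)(τ) - W(u, ū)(s) = (z̄ - z)·∫ₛ^τ |u|²`; in particular, if `Im z > 0`, `τ > s`,
`u(s) = 0` and `u` is not identically zero, then
`W(u, ū)(τ) = -2i·(Im z)·∫ₛ^τ |u|² ≠ 0`. -/
theorem wronskian_conj_identity
    (ts bs : ℕ → ℝ) (γ : ℝ) (hγ : 0 < γ)
    (ht_mono : StrictMono ts) (hgap : ∀ n, γ ≤ ts (n + 1) - ts n)
    (hbs : ∀ n, 1 < bs n)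
    (z : ℂ) (s τ : ℝ) (hsτ : s ≤ τ)
    (hs : s ∉ Set.range ts) (hτ : τ ∉ Set.range ts)
    (u : ℝ → ℂ) (hu : IsInterfaceSolution ts bs z (Icc s τ) u) :
    (wronConj (offAtoms ts (Icc s τ)) u u τ - wronConj (offAtoms ts (Icc s τ)) u u s
        = ((starRingEnd ℂ) z - z) * Complex.ofReal (∫ r in s..τ, ‖u r‖ ^ 2)) ∧
    (0 < z.im → s < τ → u s = 0 → (∃ x ∈ offAtoms ts (Icc s τ), u x ≠ 0) →
      wronConj (offAtoms ts (Icc s τ)) u u τ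
          = -2 * Complex.I * (z.im : ℂ) * Complex.ofReal (∫ r in s..τ, ‖u r‖ ^ 2) ∧
        wronConj (offAtoms ts (Icc s τ)) u u τ ≠ 0) := by
  classical
  obtain ⟨hC2, hODE, hIF⟩ := hu
  set S : Set ℝ := offAtoms ts (Icc s τ) with hSdef
  rcases eq_or_lt_of_le hsτ with rfl | hlt
  · refine ⟨by simp, fun _ hst => absurd hst (lt_irrefl _)⟩
  -- basic facts
  have hTcount : (Set.range ts).Countable := Set.countable_range ts
  have hTnull : volume (Set.range ts) = 0 := hTcount.measure_zero _
  have hSsub : S ⊆ Icc s τ := fun y hy => hy.1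
  have hSnotT : ∀ y ∈ S, y ∉ Set.range ts := fun y hy => hy.2
  have hSmeas : MeasurableSet S :=
    measurableSet_Icc.diff hTcount.measurableSet
  -- neighborhoods within S agree with neighborhoods within Icc
  have hnhds : ∀ x ∈ S, 𝓝[S] x = 𝓝[Icc s τ] x := by
    intro x hx
    obtain ⟨ε, hε, hb⟩ := aux_ball hγ ht_mono hgap hx.2
    have hmem : Metric.ball x ε ∈ 𝓝 x := Metric.ball_mem_nhds x hε
    have h1 : S ∩ Metric.ball x ε = Icc s τ ∩ Metric.ball x ε := by
      ext y
      simp only [hSdef, offAtoms, mem_inter_iff, mem_diff, Metric.mem_ball, Real.dist_eq]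
      exact ⟨fun ⟨⟨h1, _⟩, h2⟩ => ⟨h1, h2⟩, fun ⟨h1, h2⟩ => ⟨⟨h1, hb y h2⟩, h2⟩⟩
    rw [nhdsWithin_restrict' _ hmem, h1, ← nhdsWithin_restrict' _ hmem]
  have hUD : UniqueDiffOn ℝ S := by
    intro x hx
    rw [uniqueDiffWithinAt_congr (hnhds x hx)]
    exact uniqueDiffOn_Icc hlt x hx.1
  have hu_cont : ContinuousOn u S := hC2.continuousOn
  have hu'_cont : ContinuousOn (derivWithin u S) S :=
    hC2.continuousOn_derivWithin hUD one_le_two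
  have hW_cont : ContinuousOn (wronConj S u u) S := by
    exact (hu'_cont.mul hu_cont.star).sub (hu_cont.mul hu'_cont.star)
  -- choose the one-sided limits at the atoms
  choose uL uR duL duR hL hR hdL hdR hjm hjd using hIF
  set aL : ℕ → ℂ := fun n =>
    if h : ts n ∈ interior (Icc s τ) then uL n h else 0 with haL
  set aR : ℕ → ℂ := fun n =>
    if h : ts n ∈ interior (Icc s τ) then uR n h else 0 with haR
  set dL : ℕ → ℂ := fun n =>
    if h : ts n ∈ interior (Icc s τ) then duL n h else 0 with hdLdef
  set dR : ℕ → ℂ := fun n =>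
    if h : ts n ∈ interior (Icc s τ) then duR n h else 0 with hdRdef
  -- the continuous extension of the Wronskian
  set E : ℝ → ℂ := fun x =>
    if h : ∃ n, ts n = x ∧ ts n ∈ interior (Icc s τ) then
      dL h.choose * (starRingEnd ℂ) (aL h.choose)
        - aL h.choose * (starRingEnd ℂ) (dL h.choose)
    else wronConj S u u x with hEdef
  have hE_off : ∀ x, x ∉ Set.range ts → E x = wronConj S u u x := by
    intro x hx
    rw [hEdef]
    refine dif_neg ?_
    rintro ⟨n, rfl, -⟩
    exact hx ⟨n, rfl⟩
  have hE_atom : ∀ n, ts n ∈ interior (Icc s τ) →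
      E (ts n) = dL n * (starRingEnd ℂ) (aL n) - aL n * (starRingEnd ℂ) (dL n) := by
    intro n hn
    have h : ∃ m, ts m = ts n ∧ ts m ∈ interior (Icc s τ) := ⟨n, rfl, hn⟩
    have heq : h.choose = n := ht_mono.injective h.choose_spec.1
    rw [hEdef]
    simp only [dif_pos h, heq]
  -- the integrand
  set g : ℝ → ℂ := fun r => ((starRingEnd ℂ) z - z) * ((‖u r‖ : ℂ) ^ 2) with hgdef
  -- boundedness of u on S
  have hbound : ∃ C : ℝ, ∀ y ∈ S, ‖u y‖ ≤ C := by
    have hloc : ∀ x ∈ Icc s τ, ∃ V : Set ℝ, V ∈ 𝓝 x ∧ ∃ C, ∀ y ∈ V ∩ S, ‖u y‖ ≤ C := by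
      intro x hx
      by_cases hxT : x ∈ Set.range ts
      · obtain ⟨n, rfl⟩ := hxT
        have hn : ts n ∈ interior (Icc s τ) := by
          rw [interior_Icc]
          refine ⟨lt_of_le_of_ne hx.1 ?_, lt_of_le_of_ne hx.2 ?_⟩
          · intro h; exact hs ⟨n, h.symm⟩
          · intro h; exact hτ ⟨n, h⟩
        have e1 : ∀ᶠ y in 𝓝[S ∩ Iio (ts n)] (ts n), ‖u y‖ ≤ ‖uL n hn‖ + 1 := by
          have := ((hL n hn).norm.eventually_lt_const
            (show ‖uL n hn‖ < ‖uL n hn‖ + 1 by linarith))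
          exact this.mono fun y hy => hy.le
        have e2 : ∀ᶠ y in 𝓝[S ∩ Ioi (ts n)] (ts n), ‖u y‖ ≤ ‖uR n hn‖ + 1 := by
          have := ((hR n hn).norm.eventually_lt_const
            (show ‖uR n hn‖ < ‖uR n hn‖ + 1 by linarith))
          exact this.mono fun y hy => hy.le
        obtain ⟨VL, hVLopen, hVLmem, hVL⟩ := mem_nhdsWithin.1 e1
        obtain ⟨VR, hVRopen, hVRmem, hVR⟩ := mem_nhdsWithin.1 e2
        refine ⟨VL ∩ VR,
          inter_mem (hVLopen.mem_nhds hVLmem) (hVRopen.mem_nhds hVRmem),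
          max (‖uL n hn‖ + 1) (‖uR n hn‖ + 1), ?_⟩
        rintro y ⟨⟨hyL, hyR⟩, hyS⟩
        have hyne : y ≠ ts n := fun h => (hSnotT y hyS) ⟨n, h.symm⟩
        rcases lt_or_gt_of_ne hyne with h' | h'
        · exact le_trans (hVL ⟨hyL, hyS, h'⟩) (le_max_left _ _)
        · exact le_trans (hVR ⟨hyR, hyS, h'⟩) (le_max_right _ _)
      · have hxS : x ∈ S := ⟨hx, hxT⟩
        have e1 : ∀ᶠ y in 𝓝[S] x, ‖u y‖ ≤ ‖u x‖ + 1 := by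
          have := ((hu_cont x hxS).norm.eventually_lt_const
            (show ‖u x‖ < ‖u x‖ + 1 by linarith))
          exact this.mono fun y hy => hy.le
        obtain ⟨V, hVopen, hVmem, hV⟩ := mem_nhdsWithin.1 e1
        exact ⟨V, hVopen.mem_nhds hVmem, ‖u x‖ + 1,
          fun y ⟨hy1, hy2⟩ => hV ⟨hy1, hy2⟩⟩
    choose V hVnhds C hC using hloc
    obtain ⟨t, ht⟩ := isCompact_Icc.elim_nhds_subcover'
      (fun x hx => V x hx) (fun x hx => hVnhds x hx)
    have hexle := Finset.exists_le (t.image (fun x : Icc s τ => C x.1 x.2))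
    obtain ⟨M, hM⟩ := hexle
    refine ⟨M, fun y hy => ?_⟩
    have hyc := ht (hSsub hy)
    simp only [mem_iUnion, exists_prop] at hyc
    obtain ⟨x, hxt, hyV⟩ := hyc
    exact le_trans (hC x.1 x.2 y ⟨hyV, hy⟩) (hM _ (Finset.mem_image_of_mem _ hxt))
  -- interval integrability of ‖u‖^2 and of g
  have hfint : IntegrableOn (fun r => ‖u r‖ ^ 2) (Ioc s τ) volume := by
    obtain ⟨C, hC⟩ := hbound
    have hsS : s ∈ S := ⟨⟨le_refl s, hsτ⟩, hs⟩
    have hC0 : 0 ≤ C := le_trans (norm_nonneg _) (hC s hsS)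
    have hcont : ContinuousOn (fun r => ‖u r‖ ^ 2) S := (hu_cont.norm).pow 2
    have hm : AEStronglyMeasurable (fun r => ‖u r‖ ^ 2) (volume.restrict S) :=
      hcont.aestronglyMeasurable hSmeas
    have hle : volume.restrict (Ioc s τ) ≤ volume.restrict S := by
      have h1 : Ioc s τ ⊆ S ∪ Set.range ts := by
        intro y hy
        by_cases h : y ∈ Set.range ts
        · exact Or.inr h
        · exact Or.inl ⟨Ioc_subset_Icc_self hy, h⟩
      calc volume.restrict (Ioc s τ)
          ≤ volume.restrict (S ∪ Set.range ts) := Measure.restrict_mono h1 le_rfl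
        _ ≤ volume.restrict S + volume.restrict (Set.range ts) :=
            Measure.restrict_union_le _ _
        _ = volume.restrict S := by
            rw [Measure.restrict_eq_zero.2 hTnull, add_zero]
    refine ⟨hm.mono_measure hle, ?_⟩
    apply HasFiniteIntegral.restrict_of_bounded (C := C ^ 2) measure_Ioc_lt_top
    have hae1 : ∀ᵐ y ∂volume, y ∉ Set.range ts := by
      exact MeasureTheory.measure_eq_zero_iff_ae_notMem.1 hTnull
    filter_upwards [ae_restrict_of_ae hae1, ae_restrict_mem measurableSet_Ioc]
      with y hy1 hy2
    have hyS : y ∈ S := ⟨Ioc_subset_Icc_self hy2, hy1⟩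
    rw [Real.norm_eq_abs, abs_of_nonneg (sq_nonneg _)]
    exact pow_le_pow_left₀ (norm_nonneg _) (hC y hyS) 2
  have hgint : IntervalIntegrable g volume s τ := by
    rw [intervalIntegrable_iff_integrableOn_Ioc_of_le hsτ]
    have hg' : g = fun r => ((starRingEnd ℂ) z - z) * (((‖u r‖ ^ 2 : ℝ)) : ℂ) := by
      funext r; rw [hgdef]; push_cast; ring
    rw [hg']
    exact (hfint.ofReal).const_mul _
  -- continuity of E
  have hEcont : ContinuousOn E (Icc s τ) := by
    intro x hx
    by_cases hxT : x ∈ Set.range ts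
    · obtain ⟨n, rfl⟩ := hxT
      have hn : ts n ∈ interior (Icc s τ) := by
        rw [interior_Icc]
        exact ⟨lt_of_le_of_ne hx.1 (fun h => hs ⟨n, h.symm⟩),
          lt_of_le_of_ne hx.2 (fun h => hτ ⟨n, h⟩)⟩
      have haLn : aL n = uL n hn := by simp only [haL]; rw [dif_pos hn]
      have haRn : aR n = uR n hn := by simp only [haR]; rw [dif_pos hn]
      have hdLn : dL n = duL n hn := by simp only [hdLdef]; rw [dif_pos hn]
      have hdRn : dR n = duR n hn := by simp only [hdRdef]; rw [dif_pos hn]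
      -- limits of the Wronskian from the left and from the right
      have htdL : Tendsto (wronConj S u u) (𝓝[S ∩ Iio (ts n)] (ts n))
          (𝓝 (dL n * (starRingEnd ℂ) (aL n) - aL n * (starRingEnd ℂ) (dL n))) := by
        rw [haLn, hdLn]
        exact ((hdL n hn).mul ((Complex.continuous_conj.tendsto _).comp (hL n hn))).sub
          ((hL n hn).mul ((Complex.continuous_conj.tendsto _).comp (hdL n hn)))
      have htdR : Tendsto (wronConj S u u) (𝓝[S ∩ Ioi (ts n)] (ts n))
          (𝓝 (dR n * (starRingEnd ℂ) (aR n) - aR n * (starRingEnd ℂ) (dR n))) := by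
        rw [haRn, hdRn]
        exact ((hdR n hn).mul ((Complex.continuous_conj.tendsto _).comp (hR n hn))).sub
          ((hR n hn).mul ((Complex.continuous_conj.tendsto _).comp (hdR n hn)))
      have hWRL : dR n * (starRingEnd ℂ) (aR n) - aR n * (starRingEnd ℂ) (dR n)
          = dL n * (starRingEnd ℂ) (aL n) - aL n * (starRingEnd ℂ) (dL n) := by
        have hb1 : (0 : ℝ) < Real.sqrt (bs n) := Real.sqrt_pos.2 (by linarith [hbs n])
        have hbne : ((Real.sqrt (bs n) : ℝ) : ℂ) ≠ 0 := by
          exact_mod_cast hb1.ne'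
        rw [haRn, hdRn, haLn, hdLn, hjm n hn, hjd n hn, map_mul, map_div₀,
          Complex.conj_ofReal]
        field_simp
      rw [← continuousWithinAt_diff_self]
      have hsplit : Icc s τ \ {ts n}
          = (Icc s τ \ {ts n}) ∩ Iio (ts n) ∪ (Icc s τ \ {ts n}) ∩ Ioi (ts n) := by
        ext y
        simp only [mem_union, mem_inter_iff, mem_diff, mem_singleton_iff, mem_Iio, mem_Ioi]
        constructor
        · rintro ⟨h1, h2⟩
          rcases lt_or_gt_of_ne h2 with h | h
          · exact Or.inl ⟨⟨h1, h2⟩, h⟩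
          · exact Or.inr ⟨⟨h1, h2⟩, h⟩
        · rintro (⟨h, _⟩ | ⟨h, _⟩) <;> exact h
      unfold ContinuousWithinAt
      rw [hsplit, nhdsWithin_union, tendsto_sup, hE_atom n hn]
      have hball : Metric.ball (ts n) γ ∈ 𝓝 (ts n) := Metric.ball_mem_nhds _ hγ
      constructor
      · rw [nhdsWithin_restrict' _ hball]
        have hsub : (Icc s τ \ {ts n}) ∩ Iio (ts n) ∩ Metric.ball (ts n) γ
            ⊆ S ∩ Iio (ts n) := by
          rintro y ⟨⟨⟨hyIcc, hyne⟩, hyIio⟩, hyb⟩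
          rw [Metric.mem_ball, Real.dist_eq] at hyb
          exact ⟨⟨hyIcc, aux_punct ht_mono hgap n y hyb hyne⟩, hyIio⟩
        refine Filter.Tendsto.congr' ?_ (htdL.mono_left (nhdsWithin_mono _ hsub))
        refine eventually_of_mem self_mem_nhdsWithin fun y hy => ?_
        exact (hE_off y (hsub hy).1.2).symm
      · rw [nhdsWithin_restrict' _ hball]
        have hsub : (Icc s τ \ {ts n}) ∩ Ioi (ts n) ∩ Metric.ball (ts n) γ
            ⊆ S ∩ Ioi (ts n) := by
          rintro y ⟨⟨⟨hyIcc, hyne⟩, hyIoi⟩, hyb⟩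
          rw [Metric.mem_ball, Real.dist_eq] at hyb
          exact ⟨⟨hyIcc, aux_punct ht_mono hgap n y hyb hyne⟩, hyIoi⟩
        rw [← hWRL]
        refine Filter.Tendsto.congr' ?_ (htdR.mono_left (nhdsWithin_mono _ hsub))
        refine eventually_of_mem self_mem_nhdsWithin fun y hy => ?_
        exact (hE_off y (hsub hy).1.2).symm
    · have hxS : x ∈ S := ⟨hx, hxT⟩
      have h1 : ContinuousWithinAt (wronConj S u u) S x := hW_cont x hxS
      have h2 : Tendsto (wronConj S u u) (𝓝[Icc s τ] x) (𝓝 (wronConj S u u x)) := by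
        rw [← hnhds x hxS]; exact h1
      obtain ⟨ε, hε, hb⟩ := aux_ball hγ ht_mono hgap hxT
      unfold ContinuousWithinAt
      rw [hE_off x hxT, nhdsWithin_restrict' _ (Metric.ball_mem_nhds x hε)]
      refine Filter.Tendsto.congr' ?_
        (h2.mono_left (nhdsWithin_mono _ inter_subset_left))
      refine eventually_of_mem self_mem_nhdsWithin fun y hy => ?_
      have : y ∉ Set.range ts := by
        have := hy.2
        rw [Metric.mem_ball, Real.dist_eq] at this
        exact hb y this
      exact (hE_off y this).symm
  -- differentiability of E off the atoms
  have hEderiv : ∀ x ∈ Ioo s τ \ Set.range ts, HasDerivAt E (g x) x := by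
    rintro x ⟨hxI, hxT⟩
    have hxS : x ∈ S := ⟨Ioo_subset_Icc_self hxI, hxT⟩
    obtain ⟨ε0, hε0, hb⟩ := aux_ball hγ ht_mono hgap hxT
    set ε := min ε0 (min (x - s) (τ - x)) with hε
    have hεpos : 0 < ε :=
      lt_min hε0 (lt_min (by linarith [hxI.1]) (by linarith [hxI.2]))
    have hBS : Metric.ball x ε ⊆ S := by
      intro y hy
      rw [Metric.mem_ball, Real.dist_eq] at hy
      have h1 : |y - x| < ε0 := lt_of_lt_of_le hy (min_le_left _ _)
      have h2 : |y - x| < x - s :=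
        lt_of_lt_of_le hy (le_trans (min_le_right _ _) (min_le_left _ _))
      have h3 : |y - x| < τ - x :=
        lt_of_lt_of_le hy (le_trans (min_le_right _ _) (min_le_right _ _))
      rw [abs_lt] at h2 h3
      exact ⟨⟨by linarith [h2.1], by linarith [h3.2]⟩, hb y h1⟩
    have hBnhds : Metric.ball x ε ∈ 𝓝 x := Metric.ball_mem_nhds _ hεpos
    have hSx : S ∈ 𝓝 x := mem_of_superset hBnhds hBS
    have hu1 : HasDerivAt u (derivWithin u S x) x :=
      (((hC2.differentiableOn (by norm_num)) x hxS).hasDerivWithinAt).hasDerivAt hSx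
    have hC1' : ContDiffOn ℝ 1 (derivWithin u S) S := hC2.derivWithin hUD (by norm_num)
    have hu2 : HasDerivAt (derivWithin u S) (derivWithin (derivWithin u S) S x) x :=
      (((hC1'.differentiableOn one_ne_zero) x hxS).hasDerivWithinAt).hasDerivAt hSx
    have hODEx : derivWithin (derivWithin u S) S x = -(z * u x) := by
      have h := hODE x hxS
      linear_combination -h
    have hconj_u : HasDerivAt (fun y => (starRingEnd ℂ) (u y))
        ((starRingEnd ℂ) (derivWithin u S x)) x := hu1.star
    have hconj_u' : HasDerivAt (fun y => (starRingEnd ℂ) (derivWithin u S y))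
        ((starRingEnd ℂ) (derivWithin (derivWithin u S) S x)) x := hu2.star
    have hmc : (u x) * (starRingEnd ℂ) (u x) = ((‖u x‖ : ℂ)) ^ 2 := by
      rw [Complex.mul_conj]
      norm_cast
      rw [Complex.normSq_eq_norm_sq]
    have hG : HasDerivAt (wronConj S u u) (g x) x := by
      have h := (hu2.mul hconj_u).sub (hu1.mul hconj_u')
      convert h using 1
      case e'_4 => rfl
      case e'_8 => rfl
      rw [hgdef]
      show ((starRingEnd ℂ) z - z) * ((‖u x‖ : ℂ)) ^ 2 = _
      rw [← hmc, hODEx]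
      simp only [map_neg, map_mul]
      ring
    refine hG.congr_of_eventuallyEq ?_
    filter_upwards [hBnhds] with y hy
    rw [Metric.mem_ball, Real.dist_eq] at hy
    exact hE_off y (hb y (lt_of_lt_of_le hy (min_le_left _ _)))
  -- FTC
  have key : ∫ x in s..τ, g x = E τ - E s :=
    integral_eq_of_hasDerivAt_off_countable_of_le E g hsτ hTcount hEcont hEderiv hgint
  have hgval : ∫ x in s..τ, g x
      = ((starRingEnd ℂ) z - z) * Complex.ofReal (∫ r in s..τ, ‖u r‖ ^ 2) := by
    rw [hgdef]
    rw [intervalIntegral.integral_const_mul]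
    congr 1
    rw [← intervalIntegral.integral_ofReal]
    norm_num
  have main : wronConj S u u τ - wronConj S u u s
      = ((starRingEnd ℂ) z - z) * Complex.ofReal (∫ r in s..τ, ‖u r‖ ^ 2) := by
    rw [← hE_off τ hτ, ← hE_off s hs, ← key, hgval]
  refine ⟨main, ?_⟩
  intro him hlt' hu0 hex
  have hWs : wronConj S u u s = 0 := by
    simp [wronConj, hu0]
  have hIpos : 0 < ∫ r in s..τ, ‖u r‖ ^ 2 := by
    obtain ⟨x, hxS, hux⟩ := hex
    have hux' : 0 < ‖u x‖ := norm_pos_iff.2 hux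
    set c : ℝ := ‖u x‖ ^ 2 / 2 with hc
    have hc0 : 0 < c := by positivity
    have hchalf : c < ‖u x‖ ^ 2 := by rw [hc]; nlinarith
    have hcont : ContinuousWithinAt (fun y => ‖u y‖ ^ 2) S x :=
      ((hu_cont x hxS).norm.pow 2)
    have hev : {y | c < ‖u y‖ ^ 2} ∈ 𝓝[S] x := hcont (Ioi_mem_nhds hchalf)
    obtain ⟨V, hVopen, hVmem, hV⟩ := mem_nhdsWithin.1 hev
    obtain ⟨δ1, hδ1, hball1⟩ := Metric.isOpen_iff.1 hVopen x hVmem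
    obtain ⟨δ2, hδ2, hb2⟩ := aux_ball hγ ht_mono hgap hxS.2
    set δ := min δ1 δ2 with hδdef
    have hδ : 0 < δ := lt_min hδ1 hδ2
    have hkey : ∀ y, |y - x| < δ → y ∈ Icc s τ → c < ‖u y‖ ^ 2 := by
      intro y hy hyI
      have hyS : y ∈ S := ⟨hyI, hb2 y (lt_of_lt_of_le hy (min_le_right _ _))⟩
      refine hV ⟨hball1 ?_, hyS⟩
      rw [Metric.mem_ball, Real.dist_eq]
      exact lt_of_lt_of_le hy (min_le_left _ _)
    obtain ⟨p, q, hpq, hJicc, hJball⟩ :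
        ∃ p q : ℝ, p < q ∧ Ioc p q ⊆ Ioc s τ ∧ ∀ y ∈ Ioc p q, |y - x| < δ := by
      rcases lt_or_eq_of_le hxS.1.2 with hxτ | hxτ
      · refine ⟨x, min (x + δ / 2) τ, lt_min (by linarith) hxτ, ?_, ?_⟩
        · intro y hy
          exact ⟨lt_of_le_of_lt hxS.1.1 hy.1, le_trans hy.2 (min_le_right _ _)⟩
        · intro y hy
          have h1 : y ≤ x + δ / 2 := le_trans hy.2 (min_le_left _ _)
          have h2 := hy.1
          rw [abs_lt]; constructor <;> linarith
      · refine ⟨max s (τ - δ / 2), τ, max_lt hlt' (by linarith), ?_, ?_⟩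
        · intro y hy
          exact ⟨lt_of_le_of_lt (le_max_left _ _) hy.1, hy.2⟩
        · intro y hy
          have h1 : τ - δ / 2 < y := lt_of_le_of_lt (le_max_right _ _) hy.1
          have h2 := hy.2
          rw [abs_lt]; constructor <;> [linarith [hxτ]; linarith [hxτ]]
    rw [intervalIntegral.integral_of_le hsτ]
    have hJS : ∀ y ∈ Ioc p q, c ≤ ‖u y‖ ^ 2 := fun y hy =>
      (hkey y (hJball y hy) (Ioc_subset_Icc_self (hJicc hy))).le
    have hJint : IntegrableOn (fun r => ‖u r‖ ^ 2) (Ioc p q) volume :=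
      hfint.mono_set hJicc
    have h1 : c * (volume (Ioc p q)).toReal ≤ ∫ y in Ioc p q, ‖u y‖ ^ 2 :=
      setIntegral_ge_of_const_le_real measurableSet_Ioc measure_Ioc_lt_top.ne hJS hJint
    have h2 : (∫ y in Ioc p q, ‖u y‖ ^ 2) ≤ ∫ y in Ioc s τ, ‖u y‖ ^ 2 :=
      setIntegral_mono_set hfint
        (Filter.Eventually.of_forall fun y => sq_nonneg _)
        (HasSubset.Subset.eventuallyLE hJicc)
    have h3 : 0 < (volume (Ioc p q)).toReal := by
      rw [Real.volume_Ioc, ENNReal.toReal_ofReal (by linarith)]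
      linarith
    nlinarith
  have hWτ : wronConj S u u τ
      = -2 * Complex.I * (z.im : ℂ) * Complex.ofReal (∫ r in s..τ, ‖u r‖ ^ 2) := by
    have h1 : wronConj S u u τ
        = ((starRingEnd ℂ) z - z) * Complex.ofReal (∫ r in s..τ, ‖u r‖ ^ 2) := by
      have := main
      rw [hWs, sub_zero] at this
      exact this
    have h2 : (starRingEnd ℂ) z - z = -2 * Complex.I * (z.im : ℂ) := by
      have h := Complex.sub_conj z
      have h' : (starRingEnd ℂ) z - z = -(z - (starRingEnd ℂ) z) := by ring
      rw [h', h]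
      push_cast
      ring
    rw [h1, h2]
  refine ⟨hWτ, ?_⟩
  rw [hWτ]
  apply mul_ne_zero
  apply mul_ne_zero
  apply mul_ne_zero
  · norm_num
  · exact Complex.I_ne_zero
  · simpa using him.ne'
  · simpa using hIpos.ne'
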